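/- Let FreeGrp be the full subcategory of the category Grp of groups on those groups G satisfying IsFreeGroup G, and let U : FreeGrp ⥤ Type be the restriction of the forgetful functor. Then: U has a left adjoint (induced by X ↦ FreeGroup X, which lands in FreeGrp); U reflects isomorphisms; but U is not monadic, i.e. the comparison to the Eilenberg–Moore category of the induced monad is not an equivalence (¬ MonadicRightAdjoint U). -/

import Mathlib

open CategoryTheory

universe u

/-- The full subcategory of `Grp` on free groups. -/
abbrev FreeGrp := ObjectProperty.FullSubcategory (fun G : GrpCat.{u} => IsFreeGroup G)

/-- The restriction of the forgetful functor `Grp ⥤ Type` to the full subcategory of free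
groups. -/
abbrev FreeGrp.forget : FreeGrp.{u} ⥤ Type u :=
  ObjectProperty.ι (fun G : GrpCat.{u} => IsFreeGroup G) ⋙ CategoryTheory.forget GrpCat.{u}

universe v

lemma aux_cyclic (S : Type v) [Subsingleton S] :
    ∃ g : FreeGroup S, ∀ x : FreeGroup S, x ∈ Subgroup.zpowers g := by
  by_cases h : Nonempty S
  · obtain ⟨a⟩ := h
    refine ⟨FreeGroup.of a, fun x => ?_⟩
    have h1 : Subgroup.closure (Set.range (FreeGroup.of : S → FreeGroup S)) ≤
        Subgroup.zpowers (FreeGroup.of a) := by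
      rw [Subgroup.closure_le]
      rintro _ ⟨s, rfl⟩
      rw [Subsingleton.elim s a]
      exact Subgroup.mem_zpowers _
    exact h1 (by rw [FreeGroup.closure_range_of]; trivial)
  · refine ⟨1, fun x => ?_⟩
    have h1 : Subgroup.closure (Set.range (FreeGroup.of : S → FreeGroup S)) ≤
        Subgroup.zpowers 1 := by
      rw [Subgroup.closure_le]
      rintro _ ⟨s, rfl⟩
      exact absurd ⟨s⟩ h
    exact h1 (by rw [FreeGroup.closure_range_of]; trivial)

lemma aux_comm (S : Type v) [Subsingleton S] (x y : FreeGroup S) : x * y = y * x := by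
  obtain ⟨g, hg⟩ := aux_cyclic S
  obtain ⟨m, rfl⟩ := hg x
  obtain ⟨n, rfl⟩ := hg y
  exact zpow_mul_comm g m n

lemma aux_noncomm (S : Type v) (a b : S) (hab : a ≠ b) :
    FreeGroup.of a * FreeGroup.of b ≠ FreeGroup.of b * FreeGroup.of a := by
  intro h
  classical
  let x : Equiv.Perm (Fin 3) := Equiv.swap 0 1
  let y : Equiv.Perm (Fin 3) := Equiv.swap 1 2
  have := congrArg (FreeGroup.lift (fun s => if s = a then x else y)) h
  simp only [map_mul, FreeGroup.lift_apply_of, if_pos rfl, if_neg (Ne.symm hab)] at this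
  have hxy : x * y ≠ y * x := by decide
  exact hxy this

lemma key (G : Type u) [Group G] [IsFreeGroup G]
    (e : G ≃* FreeGroup PUnit.{u+1} × FreeGroup PUnit.{u+1}) : False := by
  -- the target is commutative
  have hc : ∀ p q : FreeGroup PUnit.{u+1} × FreeGroup PUnit.{u+1}, p * q = q * p := by
    rintro ⟨p1, p2⟩ ⟨q1, q2⟩
    ext
    · exact aux_comm _ p1 q1
    · exact aux_comm _ p2 q2
  -- hence G, hence FreeGroup (Generators G) is commutative
  have hcG : ∀ x y : G, x * y = y * x := fun x y =>
    e.injective (by rw [map_mul, map_mul, hc])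
  have hcF : ∀ x y : FreeGroup (IsFreeGroup.Generators G), x * y = y * x := fun x y =>
    (IsFreeGroup.toFreeGroup G).symm.injective (by rw [map_mul, map_mul, hcG])
  -- thus Generators G is a subsingleton
  have hS : Subsingleton (IsFreeGroup.Generators G) := by
    constructor
    intro a b
    by_contra hab
    exact aux_noncomm _ a b hab (hcF _ _)
  -- so G is cyclic, hence the product is cyclic
  obtain ⟨g, hg⟩ := aux_cyclic (IsFreeGroup.Generators G)
  set E := (IsFreeGroup.toFreeGroup G).symm.trans e with hE
  have hcyc : ∀ p : FreeGroup PUnit.{u+1} × FreeGroup PUnit.{u+1},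
      ∃ n : ℤ, (E g) ^ n = p := by
    intro p
    obtain ⟨n, hn⟩ := hg (E.symm p)
    have hn2 : g ^ n = E.symm p := hn
    exact ⟨n, by rw [← map_zpow, hn2, MulEquiv.apply_symm_apply]⟩
  -- derive a contradiction using the degree map to ℤ
  set ν : FreeGroup PUnit.{u+1} →* Multiplicative ℤ :=
    FreeGroup.lift (fun _ => Multiplicative.ofAdd 1) with hν
  set δ1 := ν.comp (MonoidHom.fst (FreeGroup PUnit.{u+1}) (FreeGroup PUnit.{u+1})) with hδ1
  set δ2 := ν.comp (MonoidHom.snd (FreeGroup PUnit.{u+1}) (FreeGroup PUnit.{u+1})) with hδ2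
  obtain ⟨n, hn⟩ := hcyc (FreeGroup.of PUnit.unit, 1)
  obtain ⟨m, hm⟩ := hcyc (1, FreeGroup.of PUnit.unit)
  have e1 : n * (δ1 (E g)).toAdd = 1 := by
    have := congrArg (fun z => (δ1 z).toAdd) hn
    simpa [map_zpow, hδ1, hν, toAdd_zpow] using this
  have e2 : n * (δ2 (E g)).toAdd = 0 := by
    have := congrArg (fun z => (δ2 z).toAdd) hn
    simpa [map_zpow, hδ2, toAdd_zpow] using this
  have e3 : m * (δ1 (E g)).toAdd = 0 := by
    have := congrArg (fun z => (δ1 z).toAdd) hm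
    simpa [map_zpow, hδ1, toAdd_zpow] using this
  have e4 : m * (δ2 (E g)).toAdd = 1 := by
    have := congrArg (fun z => (δ2 z).toAdd) hm
    simpa [map_zpow, hν, hδ2, toAdd_zpow] using this
  rcases mul_eq_zero.mp e2 with h | h
  · rw [h] at e1; omega
  · rw [h, mul_zero] at e4; omega

open Limits

open CategoryTheory Limits

instance (X : Type u) : IsFreeGroup (GrpCat.free.obj X) :=
  show IsFreeGroup (FreeGroup X) from inferInstance

noncomputable def FreeGrp.free : Type u ⥤ FreeGrp.{u} :=
  ObjectProperty.lift _ GrpCat.free (fun _ => inferInstance)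

noncomputable def FreeGrp.adj : FreeGrp.free.{u} ⊣ FreeGrp.forget.{u} :=
  GrpCat.adj.restrictFullyFaithful (Functor.FullyFaithful.id _)
    (ObjectProperty.fullyFaithfulι _)
    (Functor.leftUnitor _ ≪≫ (ObjectProperty.liftCompιIso _ _ _).symm)
    (Functor.rightUnitor _).symm

/-- The restricted forgetful functor `U : FreeGrp ⥤ Type` has a left adjoint and reflects
isomorphisms, but is not monadic. -/
theorem freeGrp_forget_not_monadic :
    FreeGrp.forget.{u}.IsRightAdjoint ∧ FreeGrp.forget.{u}.ReflectsIsomorphisms ∧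
      IsEmpty (MonadicRightAdjoint FreeGrp.forget.{u}) := by
  refine ⟨⟨⟨FreeGrp.free, ⟨FreeGrp.adj⟩⟩⟩, inferInstance, ⟨fun M => ?_⟩⟩
  letI := M
  letI : CreatesLimitsOfSize.{0, 0} FreeGrp.forget.{u} := monadicCreatesLimits _
  let A : FreeGrp.{u} := ⟨GrpCat.of (FreeGroup PUnit.{u+1}),
      show IsFreeGroup (FreeGroup PUnit.{u+1}) from inferInstance⟩
  haveI : HasLimit (pair A A) := hasLimit_of_created (pair A A) FreeGrp.forget.{u}
  haveI : PreservesLimit (pair A A) FreeGrp.forget.{u} :=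
    preservesLimit_of_createsLimit_and_hasLimit _ _
  let h : ((A ⨯ A).obj : Type u) →* FreeGroup PUnit.{u+1} × FreeGroup PUnit.{u+1} :=
    MonoidHom.prod (Limits.prod.fst : A ⨯ A ⟶ A).hom.hom (Limits.prod.snd : A ⨯ A ⟶ A).hom.hom
  let t : FreeGrp.forget.{u}.obj (A ⨯ A) ⟶
      (FreeGrp.forget.{u}.obj A × FreeGrp.forget.{u}.obj A : Type u) :=
    prodComparison FreeGrp.forget.{u} A A ≫ (Types.binaryProductIso _ _).hom
  have hbij : Function.Bijective h := by
    have : Function.Bijective t := (asIso t).toEquiv.bijective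
    refine (congrArg Function.Bijective (?_ : (⇑h : ((A ⨯ A).obj : Type u) → FreeGroup PUnit.{u+1} × FreeGroup PUnit.{u+1}) = ⇑(ConcreteCategory.hom t))).mpr this
    funext x
    apply Prod.ext
    · show (FreeGrp.forget.{u}.map Limits.prod.fst) x = (t x).1
      simp only [t, prodComparison, types_comp_apply,
        Types.binaryProductIso_hom_comp_fst_apply]
      have hl := Limits.prod.lift_fst (C := Type u)
        (FreeGrp.forget.{u}.map (Limits.prod.fst : A ⨯ A ⟶ A)) (FreeGrp.forget.{u}.map (Limits.prod.snd : A ⨯ A ⟶ A))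
      exact (ConcreteCategory.congr_hom hl x).symm
    · show (FreeGrp.forget.{u}.map Limits.prod.snd) x = (t x).2
      simp only [t, prodComparison, types_comp_apply,
        Types.binaryProductIso_hom_comp_snd_apply]
      have hl := Limits.prod.lift_snd (C := Type u)
        (FreeGrp.forget.{u}.map (Limits.prod.fst : A ⨯ A ⟶ A)) (FreeGrp.forget.{u}.map (Limits.prod.snd : A ⨯ A ⟶ A))
      exact (ConcreteCategory.congr_hom hl x).symm
  haveI : IsFreeGroup ((A ⨯ A).obj : Type u) := (A ⨯ A).property
  exact key _ (MulEquiv.ofBijective h hbij)
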